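/- Let 𝔊 be a finite connected symmetric graph without loops and dead ends, and let Δ_𝔈 be its edge Laplacian. If c(𝔊) ≠ 1 or 𝔊 is not bipartite, then dim{Δ_𝔈 = −1} equals c(𝔊) if 𝔊 is bipartite and c(𝔊) − 1 if 𝔊 is not bipartite. If c(𝔊) = 1 and 𝔊 is bipartite, then dim{Δ_𝔈 = −1} = 2. -/

import Mathlib

/-- The set of directed edges of a graph: ordered pairs of adjacent vertices. -/
abbrev DirEdge {V : Type*} (G : SimpleGraph V) := {p : V × V // G.Adj p.1 p.2}

/-- The edge Laplacian `Δ_𝔈 f (e) = Σ_{e' : ι(e') = τ(e), τ(e') ≠ ι(e)} f e'`,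
summing `f` over the directed edges `e'` continuing `e` without backtracking. -/
noncomputable def edgeLaplacian {V : Type*} [Fintype V] [DecidableEq V]
    (G : SimpleGraph V) [DecidableRel G.Adj] :
    (DirEdge G → ℂ) →ₗ[ℂ] (DirEdge G → ℂ) where
  toFun f e := ∑ e' ∈ Finset.univ.filter
    (fun e' : DirEdge G => e'.1.1 = e.1.2 ∧ e'.1.2 ≠ e.1.1), f e'
  map_add' f g := by funext e; simp [Finset.sum_add_distrib]
  map_smul' c f := by funext e; simp [Finset.mul_sum]

namespace EdgeLapAux
set_option linter.unusedSectionVars false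
set_option maxHeartbeats 4000000
set_option synthInstance.maxHeartbeats 1000000

open Finset Module Matrix

variable {V : Type*} [Fintype V] [DecidableEq V] (G : SimpleGraph V) [DecidableRel G.Adj]

def rev (e : DirEdge G) : DirEdge G := ⟨(e.1.2, e.1.1), e.2.symm⟩

@[simp] lemma rev_rev (e : DirEdge G) : rev G (rev G e) = e := rfl
@[simp] lemma rev_fst (e : DirEdge G) : (rev G e).1.1 = e.1.2 := rfl
@[simp] lemma rev_snd (e : DirEdge G) : (rev G e).1.2 = e.1.1 := rfl

noncomputable def outL : (DirEdge G → ℂ) →ₗ[ℂ] (V → ℂ) where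
  toFun f v := ∑ e ∈ Finset.univ.filter (fun e : DirEdge G => e.1.1 = v), f e
  map_add' f g := by funext v; simp [Finset.sum_add_distrib]
  map_smul' c f := by funext v; simp [Finset.mul_sum]

lemma outL_apply (f : DirEdge G → ℂ) (v : V) :
    outL G f v = ∑ e ∈ Finset.univ.filter (fun e : DirEdge G => e.1.1 = v), f e := rfl

lemma sum_rev (f : DirEdge G → ℂ) (v : V) :
    ∑ e ∈ Finset.univ.filter (fun e : DirEdge G => e.1.1 = v), f (rev G e)
      = ∑ e ∈ Finset.univ.filter (fun e : DirEdge G => e.1.2 = v), f e := by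
  refine Finset.sum_bij' (fun e _ => rev G e) (fun e _ => rev G e) ?_ ?_ ?_ ?_ ?_ <;>
    simp +contextual [Finset.mem_filter, rev]

lemma lap_apply (f : DirEdge G → ℂ) (e : DirEdge G) :
    edgeLaplacian G f e = outL G f e.1.2 - f (rev G e) := by
  have key : Finset.univ.filter (fun e' : DirEdge G => e'.1.1 = e.1.2)
      = insert (rev G e) (Finset.univ.filter
        (fun e' : DirEdge G => e'.1.1 = e.1.2 ∧ e'.1.2 ≠ e.1.1)) := by
    ext e'
    simp only [Finset.mem_filter, Finset.mem_insert, Finset.mem_univ, true_and]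
    constructor
    · intro h
      by_cases h2 : e'.1.2 = e.1.1
      · left; exact Subtype.ext (Prod.ext h h2)
      · right; exact ⟨h, h2⟩
    · rintro (rfl | h)
      · rfl
      · exact h.1
  have hnot : rev G e ∉ Finset.univ.filter
      (fun e' : DirEdge G => e'.1.1 = e.1.2 ∧ e'.1.2 ≠ e.1.1) := by
    simp [rev]
  show ∑ e' ∈ _, f e' = _
  rw [show outL G f e.1.2 = ∑ e' ∈ Finset.univ.filter
    (fun e' : DirEdge G => e'.1.1 = e.1.2), f e' from rfl, key, Finset.sum_insert hnot]
  ring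

lemma mem_eig_iff (f : DirEdge G → ℂ) :
    f ∈ Module.End.eigenspace (edgeLaplacian G) (-1 : ℂ) ↔
      ∀ e, outL G f e.1.2 - f (rev G e) = - f e := by
  rw [Module.End.mem_eigenspace_iff]
  constructor
  · intro h e; rw [← lap_apply]; exact congrFun h e |>.trans (by simp)
  · intro h; funext e; rw [lap_apply, h e]; simp

noncomputable def BpL : (DirEdge G → ℂ) →ₗ[ℂ] (V → ℂ) where
  toFun f v := ∑ e ∈ Finset.univ.filter (fun e : DirEdge G => e.1.1 = v),
    (f e + f (rev G e))
  map_add' f g := by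
    funext v
    show ∑ e ∈ _, _ = (∑ e ∈ Finset.univ.filter (fun e : DirEdge G => e.1.1 = v),
      (f e + f (rev G e))) + ∑ e ∈ Finset.univ.filter (fun e : DirEdge G => e.1.1 = v),
      (g e + g (rev G e))
    rw [← Finset.sum_add_distrib]
    exact Finset.sum_congr rfl fun e _ => by simp [Pi.add_apply]; ring
  map_smul' c f := by funext v; simp [Finset.mul_sum, mul_add]

lemma BpL_apply (f : DirEdge G → ℂ) (v : V) :
    BpL G f v = ∑ e ∈ Finset.univ.filter (fun e : DirEdge G => e.1.1 = v),
      (f e + f (rev G e)) := rfl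

noncomputable def BtL : (V → ℂ) →ₗ[ℂ] (DirEdge G → ℂ) where
  toFun g e := g e.1.1 + g e.1.2
  map_add' f g := by funext e; simp; ring
  map_smul' c f := by funext e; simp; ring

lemma mem_ker_Bt_iff (g : V → ℂ) :
    g ∈ LinearMap.ker (BtL G) ↔ ∀ u v, G.Adj u v → g u = - g v := by
  constructor
  · intro h u v huv
    have := congrFun (LinearMap.mem_ker.mp h) ⟨(u, v), huv⟩
    simpa [BtL, eq_neg_iff_add_eq_zero] using this
  · intro h
    rw [LinearMap.mem_ker]
    funext e
    have := h e.1.1 e.1.2 e.2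
    simp [BtL, this]

noncomputable def NMat : Matrix V (DirEdge G) ℂ :=
  fun v e => (if e.1.1 = v then 1 else 0) + (if e.1.2 = v then 1 else 0)

lemma BpL_eq : BpL G = (NMat G).mulVecLin := by
  refine LinearMap.ext fun f => funext fun v => ?_
  simp only [BpL, LinearMap.coe_mk, AddHom.coe_mk, Matrix.mulVecLin_apply, Matrix.mulVec,
    dotProduct, NMat, add_mul, ite_mul, one_mul, zero_mul]
  rw [Finset.sum_add_distrib, Finset.sum_add_distrib, ← Finset.sum_filter, ← Finset.sum_filter,
    sum_rev]

lemma BtL_eq : BtL G = (NMat G)ᵀ.mulVecLin := by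
  refine LinearMap.ext fun g => funext fun e => ?_
  simp only [BtL, LinearMap.coe_mk, AddHom.coe_mk, Matrix.mulVecLin_apply, Matrix.mulVec,
    dotProduct, Matrix.transpose_apply, NMat, add_mul, ite_mul, one_mul, zero_mul]
  rw [Finset.sum_add_distrib]
  simp [Finset.sum_ite_eq, Finset.sum_ite_eq']

lemma rank_Bp_eq : finrank ℂ (LinearMap.range (BpL G)) + finrank ℂ (LinearMap.ker (BtL G))
    = Fintype.card V := by
  have h1 : finrank ℂ (LinearMap.range (BpL G)) = (NMat G).rank := by rw [BpL_eq]; rfl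
  have h2 : finrank ℂ (LinearMap.range (BtL G)) = Matrix.rank ((NMat G)ᵀ) := by
    rw [BtL_eq]; rfl
  have h3 := LinearMap.finrank_range_add_finrank_ker (BtL G)
  rw [h2, Matrix.rank_transpose, ← h1, Module.finrank_fintype_fun_eq_card] at h3
  exact h3

lemma walk_sign (g : V → ℂ) (hg : ∀ u v, G.Adj u v → g u = - g v) {u v : V}
    (w : G.Walk u v) : g v = g u ∨ g v = - g u := by
  induction w with
  | nil => exact Or.inl rfl
  | cons h p ih =>
    rename_i a b c'
    have hba : g b = - g a := by rw [hg a b h, neg_neg]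
    rcases ih with h1 | h1
    · right; rw [h1, hba]
    · left; rw [h1, hba, neg_neg]

lemma walk_zero (g : V → ℂ) (hg : ∀ u v, G.Adj u v → g u = - g v) {u v : V}
    (w : G.Walk u v) (h0 : g u = 0) : g v = 0 := by
  rcases walk_sign G g hg w with h | h <;> simp [h, h0]

lemma finrank_ker_Bt_nonbip (hconn : G.Connected) (hnb : ¬ G.Colorable 2) :
    finrank ℂ (LinearMap.ker (BtL G)) = 0 := by
  have : LinearMap.ker (BtL G) = ⊥ := by
    rw [Submodule.eq_bot_iff]
    intro g hgmem
    have hg := (mem_ker_Bt_iff G g).mp hgmem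
    by_contra hne
    have : ∃ v₀, g v₀ ≠ 0 := by
      by_contra hz
      push_neg at hz
      exact hne (funext hz)
    obtain ⟨v₀, hv₀⟩ := this
    have hdich : ∀ v, g v = g v₀ ∨ g v = - g v₀ := fun v =>
      walk_sign G g hg (hconn v₀ v).some
    refine hnb ⟨SimpleGraph.Coloring.mk
      (fun v => if g v = g v₀ then (0 : Fin 2) else 1) ?_⟩
    intro u v huv
    have hne' : g u = - g v := hg u v huv
    by_cases h1 : g u = g v₀ <;> by_cases h2 : g v = g v₀ <;> simp only [h1, h2, if_pos, if_neg,
      if_true, if_false, ne_eq, not_true_eq_false, not_false_eq_true, Fin.zero_eq_one_iff,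
      Fin.one_eq_zero_iff]
    · exfalso
      rw [h1, h2] at hne'
      have hz : (2 : ℂ) * g v₀ = 0 := by linear_combination hne'
      simp at hz
      exact hv₀ hz
    · decide
    · decide
    · exfalso
      rcases hdich u with h | h
      · exact absurd h h1
      rcases hdich v with h' | h'
      · exact absurd h' h2
      rw [h, h'] at hne'
      have hz : (2 : ℂ) * g v₀ = 0 := by linear_combination -hne'
      simp at hz
      exact hv₀ hz
  simp [this]

noncomputable def chi (C : G.Coloring (Fin 2)) : V → ℂ :=
  fun v => if C v = 0 then 1 else -1

lemma chi_edge (C : G.Coloring (Fin 2)) : ∀ u v, G.Adj u v → chi G C u = - chi G C v := by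
  intro u v huv
  have hCC := C.valid huv
  have h2 : ∀ x : Fin 2, x = 0 ∨ x = 1 := by decide
  rcases h2 (C u) with h | h <;> rcases h2 (C v) with h' | h' <;> simp_all [chi]

lemma chi_ne_zero (C : G.Coloring (Fin 2)) (v : V) : chi G C v ≠ 0 := by
  unfold chi; split <;> simp

lemma chi_sq (C : G.Coloring (Fin 2)) (v : V) : chi G C v * chi G C v = 1 := by
  unfold chi; split <;> norm_num

lemma chi_mem_ker (C : G.Coloring (Fin 2)) : chi G C ∈ LinearMap.ker (BtL G) :=
  (mem_ker_Bt_iff G _).mpr (chi_edge G C)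

lemma ker_Bt_eq_span (hconn : G.Connected) (C : G.Coloring (Fin 2)) :
    LinearMap.ker (BtL G) = Submodule.span ℂ {chi G C} := by
  obtain ⟨v₀⟩ := hconn.nonempty
  apply le_antisymm
  · intro g hgmem
    have hg := (mem_ker_Bt_iff G g).mp hgmem
    set t : ℂ := g v₀ / chi G C v₀ with ht
    have hsub : g = t • chi G C := by
      have hker : (g - t • chi G C) ∈ LinearMap.ker (BtL G) := by
        refine Submodule.sub_mem _ hgmem (Submodule.smul_mem _ _ ?_)
        exact chi_mem_ker G C
      have hmem := (mem_ker_Bt_iff G _).mp hker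
      have h0 : (g - t • chi G C) v₀ = 0 := by
        simp [ht, div_mul_cancel₀ _ (chi_ne_zero G C v₀)]
      have : ∀ v, (g - t • chi G C) v = 0 := fun v =>
        walk_zero G _ hmem (hconn v₀ v).some h0
      funext v
      have h := this v
      simp only [Pi.sub_apply, sub_eq_zero] at h
      exact h
    rw [hsub]
    exact Submodule.smul_mem _ _ (Submodule.mem_span_singleton_self _)
  · rw [Submodule.span_le, Set.singleton_subset_iff]
    exact chi_mem_ker G C

lemma finrank_ker_Bt_bip (hconn : G.Connected) (C : G.Coloring (Fin 2)) :
    finrank ℂ (LinearMap.ker (BtL G)) = 1 := by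
  obtain ⟨v₀⟩ := hconn.nonempty
  rw [ker_Bt_eq_span G hconn C]
  exact finrank_span_singleton (fun h => chi_ne_zero G C v₀ (congrFun h v₀))

noncomputable def symDiffL : (DirEdge G → ℂ) →ₗ[ℂ] (DirEdge G → ℂ) where
  toFun f e := f e - f (rev G e)
  map_add' f g := by funext e; simp; ring
  map_smul' c f := by funext e; simp; ring

noncomputable def asymL : (DirEdge G → ℂ) →ₗ[ℂ] (DirEdge G → ℂ) where
  toFun f e := f e + f (rev G e)
  map_add' f g := by funext e; simp; ring
  map_smul' c f := by funext e; simp; ring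

noncomputable def Sym : Submodule ℂ (DirEdge G → ℂ) := LinearMap.ker (symDiffL G)
noncomputable def Asym : Submodule ℂ (DirEdge G → ℂ) := LinearMap.ker (asymL G)

noncomputable instance : AddCommGroup ↥(Sym G) := Submodule.addCommGroup (Sym G)
noncomputable instance : Module ℂ ↥(Sym G) := Submodule.module (Sym G)
instance : FiniteDimensional ℂ ↥(Sym G) :=
  FiniteDimensional.finiteDimensional_submodule (Sym G)

lemma mem_Sym_iff (f : DirEdge G → ℂ) : f ∈ Sym G ↔ ∀ e, f (rev G e) = f e := by
  simp only [Sym, LinearMap.mem_ker, symDiffL, LinearMap.coe_mk, AddHom.coe_mk]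
  constructor
  · intro h e; have := congrFun h e; simp at this; linear_combination -this
  · intro h; funext e; simp [h e]

lemma mem_Asym_iff (f : DirEdge G → ℂ) : f ∈ Asym G ↔ ∀ e, f (rev G e) = - f e := by
  simp only [Asym, LinearMap.mem_ker, asymL, LinearMap.coe_mk, AddHom.coe_mk]
  constructor
  · intro h e; have := congrFun h e; simp at this; linear_combination this
  · intro h; funext e; simp [h e]

noncomputable def orient : DirEdge G → ℂ :=
  fun e => if (Fintype.equivFin V e.1.1 : ℕ) < Fintype.equivFin V e.1.2 then 1 else -1

lemma orient_rev (e : DirEdge G) : orient G (rev G e) = - orient G e := by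
  have hne : e.1.1 ≠ e.1.2 := e.2.ne
  have hne' : (Fintype.equivFin V e.1.1 : ℕ) ≠ Fintype.equivFin V e.1.2 := by
    intro h
    exact hne (Fintype.equivFin V |>.injective (Fin.ext h))
  rcases lt_or_gt_of_ne hne' with h | h <;>
    simp [orient, rev, h, not_lt_of_gt h, le_of_lt h, not_lt.mpr (le_of_lt h)]

lemma orient_sq (e : DirEdge G) : orient G e * orient G e = 1 := by
  unfold orient; split <;> norm_num

noncomputable def mulOr : (DirEdge G → ℂ) ≃ₗ[ℂ] (DirEdge G → ℂ) where
  toFun f e := orient G e * f e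
  invFun f e := orient G e * f e
  map_add' f g := by funext e; simp; ring
  map_smul' c f := by funext e; simp; ring
  left_inv f := by funext e; simp [← mul_assoc, orient_sq]
  right_inv f := by funext e; simp [← mul_assoc, orient_sq]

lemma map_Sym_eq : (Sym G).map (mulOr G : (DirEdge G → ℂ) →ₗ[ℂ] (DirEdge G → ℂ)) = Asym G := by
  ext f
  simp only [Submodule.mem_map]
  constructor
  · rintro ⟨s, hs, rfl⟩
    rw [mem_Asym_iff]
    intro e
    have := (mem_Sym_iff G s).mp hs e
    show orient G (rev G e) * s (rev G e) = - (orient G e * s e)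
    rw [orient_rev, this]; ring
  · intro hf
    refine ⟨fun e => orient G e * f e, ?_, ?_⟩
    · rw [mem_Sym_iff]
      intro e
      have := (mem_Asym_iff G f).mp hf e
      show orient G (rev G e) * f (rev G e) = _
      rw [orient_rev, this]; ring
    · funext e
      show orient G e * (orient G e * f e) = f e
      rw [← mul_assoc, orient_sq, one_mul]

lemma Sym_inf_Asym : Sym G ⊓ Asym G = ⊥ := by
  rw [Submodule.eq_bot_iff]
  rintro f ⟨h1, h2⟩
  have h1 := (mem_Sym_iff G f).mp h1
  have h2 := (mem_Asym_iff G f).mp h2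
  funext e
  have := (h1 e).symm.trans (h2 e)
  have : (2 : ℂ) * f e = 0 := by linear_combination this
  simpa using this

lemma Sym_sup_Asym : Sym G ⊔ Asym G = ⊤ := by
  rw [eq_top_iff]
  intro f _
  rw [Submodule.mem_sup]
  refine ⟨fun e => (f e + f (rev G e)) / 2, ?_, fun e => (f e - f (rev G e)) / 2, ?_, ?_⟩
  · rw [mem_Sym_iff]; intro e; show (f (rev G e) + f (rev G (rev G e))) / 2 = _
    show (f (rev G e) + f e) / 2 = _; ring
  · rw [mem_Asym_iff]; intro e; show (f (rev G e) - f (rev G (rev G e))) / 2 = _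
    show (f (rev G e) - f e) / 2 = _; ring
  · funext e; simp; ring

lemma two_finrank_Sym : 2 * finrank ℂ (Sym G) = Fintype.card (DirEdge G) := by
  have h := Submodule.finrank_sup_add_finrank_inf_eq (Sym G) (Asym G)
  have h2 : finrank ℂ (Sym G) = finrank ℂ (Asym G) := by
    rw [← map_Sym_eq]
    exact (LinearEquiv.finrank_map_eq _ _).symm
  rw [Sym_inf_Asym, Sym_sup_Asym, finrank_bot, finrank_top, add_zero,
    Module.finrank_fintype_fun_eq_card, ← h2] at h
  omega

lemma card_filter_fst (v : V) :
    (Finset.univ.filter (fun e : DirEdge G => e.1.1 = v)).card = G.degree v := by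
  show _ = (G.neighborFinset v).card
  refine Finset.card_bij (fun e _ => e.1.2) ?_ ?_ ?_
  · rintro e he
    simp only [Finset.mem_filter, Finset.mem_univ, true_and] at he
    simp only [SimpleGraph.mem_neighborFinset]
    rw [← he]; exact e.2
  · rintro e1 h1 e2 h2 h
    simp only [Finset.mem_filter, Finset.mem_univ, true_and] at h1 h2
    exact Subtype.ext (Prod.ext (h1.trans h2.symm) h)
  · intro w hw
    simp only [SimpleGraph.mem_neighborFinset] at hw
    exact ⟨⟨(v, w), hw⟩, by simp, rfl⟩

lemma card_dirEdge : Fintype.card (DirEdge G) = ∑ v, G.degree v := by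
  rw [← Finset.card_univ,
    Finset.card_eq_sum_card_fiberwise (f := fun e : DirEdge G => e.1.1)
      (t := Finset.univ) (fun _ _ => Finset.mem_univ _)]
  exact Finset.sum_congr rfl fun v _ => card_filter_fst G v

noncomputable def BpS : (Sym G) →ₗ[ℂ] (V → ℂ) := (BpL G).comp (Sym G).subtype

lemma range_BpS : LinearMap.range (BpS G) = LinearMap.range (BpL G) := by
  apply le_antisymm
  · rintro _ ⟨s, rfl⟩
    exact ⟨s.1, rfl⟩
  · rintro _ ⟨f, rfl⟩
    have hsym : (fun e => ((2:ℂ))⁻¹ * (f e + f (rev G e))) ∈ Sym G := by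
      rw [mem_Sym_iff]
      intro e
      show (2:ℂ)⁻¹ * (f (rev G e) + f (rev G (rev G e))) = _
      show (2:ℂ)⁻¹ * (f (rev G e) + f e) = _
      ring
    refine ⟨⟨_, hsym⟩, ?_⟩
    show BpL G _ = BpL G f
    funext v
    show ∑ e ∈ _, _ = ∑ e ∈ _, _
    refine Finset.sum_congr rfl fun e _ => ?_
    show (2:ℂ)⁻¹ * (f e + f (rev G e)) + (2:ℂ)⁻¹ * (f (rev G e) + f (rev G (rev G e)))
      = f e + f (rev G e)
    show (2:ℂ)⁻¹ * (f e + f (rev G e)) + (2:ℂ)⁻¹ * (f (rev G e) + f e) = f e + f (rev G e)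
    ring

noncomputable def phiL (χ : V → ℂ) : (V → ℂ) →ₗ[ℂ] ℂ where
  toFun h := ∑ v, χ v * h v
  map_add' f g := by simp [mul_add, Finset.sum_add_distrib]
  map_smul' c f := by simp [Finset.mul_sum]; exact Finset.sum_congr rfl fun v _ => by ring

lemma sum_rev_univ (f : DirEdge G → ℂ) :
    ∑ e : DirEdge G, f (rev G e) = ∑ e : DirEdge G, f e :=
  Finset.sum_bijective (rev G)
    (Function.Involutive.bijective (fun e => rfl)) (by simp) (fun e _ => rfl)

lemma phi_Bp (χ : V → ℂ) (hχ : ∀ e : DirEdge G, χ e.1.1 + χ e.1.2 = 0)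
    (f : DirEdge G → ℂ) : phiL χ (BpL G f) = 0 := by
  show ∑ v, χ v * ∑ e ∈ Finset.univ.filter (fun e : DirEdge G => e.1.1 = v),
    (f e + f (rev G e)) = 0
  have step1 : ∀ v, χ v * ∑ e ∈ Finset.univ.filter (fun e : DirEdge G => e.1.1 = v),
      (f e + f (rev G e))
      = ∑ e ∈ Finset.univ.filter (fun e : DirEdge G => e.1.1 = v),
        χ e.1.1 * (f e + f (rev G e)) := by
    intro v
    rw [Finset.mul_sum]
    refine Finset.sum_congr rfl fun e he => ?_
    simp only [Finset.mem_filter] at he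
    rw [he.2]
  simp_rw [step1]
  rw [Finset.sum_fiberwise Finset.univ (fun e : DirEdge G => e.1.1)
    (fun e => χ e.1.1 * (f e + f (rev G e)))]
  have expand : ∀ e : DirEdge G, χ e.1.1 * (f e + f (rev G e))
      = χ e.1.1 * f e + χ e.1.1 * f (rev G e) := fun e => by ring
  simp_rw [expand]
  rw [Finset.sum_add_distrib]
  have hre : ∑ e : DirEdge G, χ e.1.1 * f (rev G e)
      = ∑ e : DirEdge G, χ e.1.2 * f e := by
    have := sum_rev_univ G (fun e => χ e.1.2 * f e)
    simpa [rev] using this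
  rw [hre, ← Finset.sum_add_distrib]
  have : ∀ e : DirEdge G, χ e.1.1 * f e + χ e.1.2 * f e = (χ e.1.1 + χ e.1.2) * f e :=
    fun e => by ring
  simp_rw [this, hχ, zero_mul, Finset.sum_const_zero]

/-- `2 - deg v` as a complex number. -/
noncomputable def ddF : V → ℂ := fun v => 2 - (G.degree v : ℂ)

noncomputable def mulDD : (V → ℂ) →ₗ[ℂ] (V → ℂ) where
  toFun g v := g v * ddF G v
  map_add' f g := by funext v; simp; ring
  map_smul' c f := by funext v; simp; ring

/-- The constraint map whose kernel is isomorphic to the `-1`-eigenspace. -/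
noncomputable def TT : ((Sym G) × (V → ℂ)) →ₗ[ℂ] ((DirEdge G → ℂ) × (V → ℂ)) :=
  ((BtL G).comp (LinearMap.snd ℂ (Sym G) (V → ℂ))).prod
    (((BpL G).comp ((Sym G).subtype.comp (LinearMap.fst ℂ (Sym G) (V → ℂ))))
      - (mulDD G).comp (LinearMap.snd ℂ (Sym G) (V → ℂ)))

noncomputable def KK : Submodule ℂ ((Sym G) × (V → ℂ)) := LinearMap.ker (TT G)

noncomputable instance : AddCommGroup ↥(KK G) := Submodule.addCommGroup (KK G)
noncomputable instance : Module ℂ ↥(KK G) := Submodule.module (KK G)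
instance : FiniteDimensional ℂ ↥(KK G) :=
  FiniteDimensional.finiteDimensional_submodule (KK G)

lemma mem_KK_iff (x : (Sym G) × (V → ℂ)) :
    x ∈ KK G ↔ (x.2 ∈ LinearMap.ker (BtL G)) ∧ BpL G x.1.1 = fun v => x.2 v * ddF G v := by
  simp only [KK, LinearMap.mem_ker, TT, LinearMap.prod_apply, LinearMap.coe_comp,
    Function.comp_apply, LinearMap.snd_apply, LinearMap.fst_apply, Submodule.coe_subtype,
    Function.prod, Prod.mk_eq_zero, LinearMap.sub_apply]
  constructor
  · rintro ⟨h1, h2⟩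
    refine ⟨LinearMap.mem_ker.mpr h1, ?_⟩
    funext v
    have := congrFun h2 v
    simp only [Pi.sub_apply, Pi.zero_apply, sub_eq_zero] at this
    exact this
  · rintro ⟨h1, h2⟩
    refine ⟨LinearMap.mem_ker.mp h1, ?_⟩
    funext v
    simp only [Pi.sub_apply, Pi.zero_apply, sub_eq_zero]
    exact congrFun h2 v

/-! ### Key sum computations -/

lemma sum_const_filter (g : V → ℂ) (hg : ∀ u v, G.Adj u v → g u = - g v) (v : V) :
    ∑ e ∈ Finset.univ.filter (fun e : DirEdge G => e.1.1 = v), g e.1.2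
      = - ((G.degree v : ℂ) * g v) := by
  have : ∀ e ∈ Finset.univ.filter (fun e : DirEdge G => e.1.1 = v), g e.1.2 = - g v := by
    intro e he
    simp only [Finset.mem_filter, Finset.mem_univ, true_and] at he
    have := hg e.1.1 e.1.2 e.2
    rw [he] at this
    linear_combination this
  rw [Finset.sum_congr rfl this, Finset.sum_const, card_filter_fst G v, nsmul_eq_mul]
  ring

lemma outL_of_sym (s : DirEdge G → ℂ) (hs : ∀ e, s (rev G e) = s e) (v : V) :
    BpL G s v = 2 * outL G s v := by
  rw [BpL_apply, outL_apply, Finset.mul_sum]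
  exact Finset.sum_congr rfl fun e _ => by rw [hs e]; ring

/-! ### The forward and backward maps -/

/-- Ambient forward map: `f ↦ (e ↦ f e + outL f (τ e) / 2)`. -/
noncomputable def fwdAmb : (DirEdge G → ℂ) →ₗ[ℂ] (DirEdge G → ℂ) where
  toFun f e := f e + (2:ℂ)⁻¹ * outL G f e.1.2
  map_add' f g := by funext e; simp [Pi.add_apply, map_add]; ring
  map_smul' c f := by funext e; simp [_root_.map_smul]; ring

/-- Ambient backward map: `(s, g) ↦ (e ↦ s e - g (τ e) / 2)`. -/
noncomputable def bwdAmb : ((Sym G) × (V → ℂ)) →ₗ[ℂ] (DirEdge G → ℂ) where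
  toFun x e := x.1.1 e - (2:ℂ)⁻¹ * x.2 e.1.2
  map_add' x y := by funext e; simp; ring
  map_smul' c x := by funext e; simp; ring

section Equiv

-- the eigenspace
noncomputable abbrev EIG : Submodule ℂ (DirEdge G → ℂ) :=
  Module.End.eigenspace (edgeLaplacian G) (-1 : ℂ)

lemma eig_flip (f : DirEdge G → ℂ) (hf : f ∈ EIG G) :
    ∀ u v, G.Adj u v → outL G f u = - outL G f v := by
  have hf' := (mem_eig_iff G f).mp hf
  intro u v huv
  have h1 := hf' ⟨(u, v), huv⟩
  have h2 := hf' ⟨(v, u), huv.symm⟩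
  simp only [rev] at h1 h2
  -- h1 : outL G f v - f ⟨(v,u),_⟩ = - f ⟨(u,v),_⟩
  -- h2 : outL G f u - f ⟨(u,v),_⟩ = - f ⟨(v,u),_⟩
  linear_combination h1 + h2

lemma fwd_mem_Sym (f : DirEdge G → ℂ) (hf : f ∈ EIG G) : fwdAmb G f ∈ Sym G := by
  have hf' := (mem_eig_iff G f).mp hf
  rw [mem_Sym_iff]
  intro e
  show f (rev G e) + (2:ℂ)⁻¹ * outL G f (rev G e).1.2 = f e + (2:ℂ)⁻¹ * outL G f e.1.2
  rw [rev_snd]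
  have h1 := hf' e
  have hflip := eig_flip G f hf e.1.1 e.1.2 e.2
  linear_combination -h1 + (2:ℂ)⁻¹ * hflip

lemma fwd_outL_mem_ker (f : DirEdge G → ℂ) (hf : f ∈ EIG G) :
    outL G f ∈ LinearMap.ker (BtL G) :=
  (mem_ker_Bt_iff G _).mpr (eig_flip G f hf)

lemma fwd_Bp (f : DirEdge G → ℂ) (hf : f ∈ EIG G) :
    BpL G (fwdAmb G f) = fun v => outL G f v * ddF G v := by
  have hf' := (mem_eig_iff G f).mp hf
  have hflip := eig_flip G f hf
  funext v
  have hsym := fwd_mem_Sym G f hf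
  rw [outL_of_sym G _ ((mem_Sym_iff G _).mp hsym) v]
  -- outL of fwdAmb f at v
  have : outL G (fwdAmb G f) v = ∑ e ∈ Finset.univ.filter (fun e : DirEdge G => e.1.1 = v),
      (f e + (2:ℂ)⁻¹ * outL G f e.1.2) := rfl
  rw [this]
  rw [Finset.sum_add_distrib]
  -- ∑ f e over the filter = outL f v
  rw [← Finset.mul_sum, sum_const_filter G (outL G f)
    (fun u w h => hflip u w h) v]
  -- remaining: need ∑ f e = outL f v and combine
  have houtv : ∑ e ∈ Finset.univ.filter (fun e : DirEdge G => e.1.1 = v), f e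
      = outL G f v := rfl
  rw [houtv, ddF]
  ring

noncomputable def fwdK : (EIG G) →ₗ[ℂ] (KK G) :=
  LinearMap.codRestrict (KK G)
    ((LinearMap.codRestrict (Sym G) ((fwdAmb G).comp (EIG G).subtype)
        (fun f => fwd_mem_Sym G f.1 f.2)).prod
      ((outL G).comp (EIG G).subtype))
    (fun f => by
      rw [mem_KK_iff]
      exact ⟨fwd_outL_mem_ker G f.1 f.2, fwd_Bp G f.1 f.2⟩)

lemma bwd_outL (x : (Sym G) × (V → ℂ)) (hx : x ∈ KK G) :
    outL G (bwdAmb G x) = x.2 := by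
  obtain ⟨h1, h2⟩ := (mem_KK_iff G x).mp hx
  have hW := (mem_ker_Bt_iff G x.2).mp h1
  funext v
  have : outL G (bwdAmb G x) v = ∑ e ∈ Finset.univ.filter (fun e : DirEdge G => e.1.1 = v),
      (x.1.1 e - (2:ℂ)⁻¹ * x.2 e.1.2) := rfl
  rw [this, Finset.sum_sub_distrib, ← Finset.mul_sum, sum_const_filter G x.2 hW v]
  have hsum : ∑ e ∈ Finset.univ.filter (fun e : DirEdge G => e.1.1 = v), x.1.1 e
      = outL G x.1.1 v := rfl
  have hBp := congrFun h2 v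
  have h2out := outL_of_sym G x.1.1 ((mem_Sym_iff G x.1.1).mp x.1.2) v
  rw [hBp] at h2out
  rw [hsum]
  have : outL G x.1.1 v = (x.2 v * ddF G v) / 2 := by
    field_simp
    linear_combination -h2out
  rw [this, ddF]
  field_simp
  ring

lemma bwd_mem_eig (x : (Sym G) × (V → ℂ)) (hx : x ∈ KK G) : bwdAmb G x ∈ EIG G := by
  obtain ⟨h1, h2⟩ := (mem_KK_iff G x).mp hx
  have hW := (mem_ker_Bt_iff G x.2).mp h1
  have hsym := (mem_Sym_iff G x.1.1).mp x.1.2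
  rw [mem_eig_iff]
  intro e
  rw [bwd_outL G x hx]
  show x.2 e.1.2 - (x.1.1 (rev G e) - (2:ℂ)⁻¹ * x.2 (rev G e).1.2)
    = - (x.1.1 e - (2:ℂ)⁻¹ * x.2 e.1.2)
  rw [rev_snd, hsym e]
  have := hW e.1.1 e.1.2 e.2
  linear_combination (2:ℂ)⁻¹ * this
  
noncomputable def bwdK : (KK G) →ₗ[ℂ] (EIG G) :=
  LinearMap.codRestrict (EIG G) ((bwdAmb G).comp (KK G).subtype)
    (fun x => bwd_mem_eig G x.1 x.2)

lemma finrank_eig_eq_KK : finrank ℂ (EIG G) = finrank ℂ (KK G) := by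
  refine LinearEquiv.finrank_eq (LinearEquiv.ofLinear (fwdK G) (bwdK G) ?_ ?_)
  · -- fwdK ∘ bwdK = id on KK
    refine LinearMap.ext fun x => ?_
    apply Subtype.ext
    apply Prod.ext
    · apply Subtype.ext
      funext e
      show bwdAmb G x.1 e + (2:ℂ)⁻¹ * outL G (bwdAmb G x.1) e.1.2 = x.1.1.1 e
      rw [bwd_outL G x.1 x.2]
      show x.1.1.1 e - (2:ℂ)⁻¹ * x.1.2 e.1.2 + (2:ℂ)⁻¹ * x.1.2 e.1.2 = x.1.1.1 e
      ring
    · show outL G (bwdAmb G x.1) = x.1.2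
      exact bwd_outL G x.1 x.2
  · -- bwdK ∘ fwdK = id on EIG
    refine LinearMap.ext fun f => ?_
    apply Subtype.ext
    funext e
    show fwdAmb G f.1 e - (2:ℂ)⁻¹ * outL G f.1 e.1.2 = f.1 e
    show f.1 e + (2:ℂ)⁻¹ * outL G f.1 e.1.2 - (2:ℂ)⁻¹ * outL G f.1 e.1.2 = f.1 e
    ring

end Equiv

/-! ### Dimension count for `KK` -/

noncomputable def piK : (KK G) →ₗ[ℂ] (V → ℂ) :=
  (LinearMap.snd ℂ (Sym G) (V → ℂ)).comp (KK G).subtype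

noncomputable def inclK : (LinearMap.ker (BpS G)) →ₗ[ℂ] (KK G) :=
  LinearMap.codRestrict (KK G)
    ((LinearMap.ker (BpS G)).subtype.prod 0)
    (fun s => by
      rw [mem_KK_iff]
      constructor
      · simp
      · have hs := s.2
        simp only [LinearMap.mem_ker, BpS, LinearMap.coe_comp, Function.comp_apply,
          Submodule.coe_subtype] at hs
        simp only [LinearMap.prod_apply, Function.prod, LinearMap.zero_apply, Submodule.coe_subtype]
        rw [hs]
        funext v
        simp)

lemma inclK_inj : Function.Injective (inclK G) := by
  intro a b h
  apply Subtype.ext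
  have := congrArg (fun x : KK G => x.1.1) h
  exact this

lemma range_inclK : LinearMap.range (inclK G) = LinearMap.ker (piK G) := by
  apply le_antisymm
  · rintro _ ⟨s, rfl⟩
    simp only [LinearMap.mem_ker, piK, LinearMap.coe_comp, Function.comp_apply]
    rfl
  · rintro x hx
    simp only [LinearMap.mem_ker, piK, LinearMap.coe_comp, Function.comp_apply,
      LinearMap.snd_apply, Submodule.coe_subtype] at hx
    -- x.1.2 = 0
    have hmem := (mem_KK_iff G x.1).mp x.2
    have hBp : BpL G x.1.1.1 = 0 := by
      rw [hmem.2]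
      funext v
      rw [hx]
      simp
    have hker : x.1.1 ∈ LinearMap.ker (BpS G) := by
      simp only [LinearMap.mem_ker, BpS, LinearMap.coe_comp, Function.comp_apply,
        Submodule.coe_subtype]
      exact hBp
    refine ⟨⟨x.1.1, hker⟩, ?_⟩
    apply Subtype.ext
    apply Prod.ext
    · rfl
    · show (0 : V → ℂ) = x.1.2
      exact hx.symm

lemma finrank_ker_piK : finrank ℂ (LinearMap.ker (piK G)) = finrank ℂ (LinearMap.ker (BpS G)) := by
  rw [← range_inclK]
  exact LinearMap.finrank_range_of_inj (inclK_inj G)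

lemma range_piK_le : LinearMap.range (piK G) ≤ LinearMap.ker (BtL G) := by
  rintro _ ⟨x, rfl⟩
  exact ((mem_KK_iff G x.1).mp x.2).1

/-! ### Putting it together -/

lemma finrank_KK_eq :
    finrank ℂ (KK G) = finrank ℂ (LinearMap.range (piK G)) + finrank ℂ (LinearMap.ker (BpS G)) := by
  have h := LinearMap.finrank_range_add_finrank_ker (piK G)
  rw [finrank_ker_piK] at h
  omega


lemma ker_Bt_bot (hconn : G.Connected) (hnb : ¬ G.Colorable 2) :
    LinearMap.ker (BtL G) = ⊥ := by
  rw [Submodule.eq_bot_iff]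
  intro g hgmem
  have hg := (mem_ker_Bt_iff G g).mp hgmem
  by_contra hne
  have : ∃ v₀, g v₀ ≠ 0 := by
    by_contra hz
    push_neg at hz
    exact hne (funext hz)
  obtain ⟨v₀, hv₀⟩ := this
  have hdich : ∀ v, g v = g v₀ ∨ g v = - g v₀ := fun v =>
    walk_sign G g hg (hconn v₀ v).some
  refine hnb ⟨SimpleGraph.Coloring.mk
    (fun v => if g v = g v₀ then (0 : Fin 2) else 1) ?_⟩
  intro u v huv
  have hne' : g u = - g v := hg u v huv
  by_cases h1 : g u = g v₀ <;> by_cases h2 : g v = g v₀ <;> simp only [h1, h2, if_pos, if_neg,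
    if_true, if_false, ne_eq, not_true_eq_false, not_false_eq_true, Fin.zero_eq_one_iff,
    Fin.one_eq_zero_iff]
  · exfalso
    rw [h1, h2] at hne'
    have hz : (2 : ℂ) * g v₀ = 0 := by linear_combination hne'
    simp at hz
    exact hv₀ hz
  · decide
  · decide
  · exfalso
    rcases hdich u with h | h
    · exact absurd h h1
    rcases hdich v with h' | h'
    · exact absurd h' h2
    rw [h, h'] at hne'
    have hz : (2 : ℂ) * g v₀ = 0 := by linear_combination -hne'
    simp at hz
    exact hv₀ hz

lemma chi_sum_zero (C : G.Coloring (Fin 2)) :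
    ∀ e : DirEdge G, chi G C e.1.1 + chi G C e.1.2 = 0 := fun e => by
  have := chi_edge G C e.1.1 e.1.2 e.2
  rw [this]; ring

lemma phi_chi (C : G.Coloring (Fin 2)) :
    phiL (chi G C) (chi G C) = (Fintype.card V : ℂ) := by
  show ∑ v, chi G C v * chi G C v = _
  have : ∀ v ∈ Finset.univ, chi G C v * chi G C v = 1 := fun v _ => chi_sq G C v
  rw [Finset.sum_congr rfl this, Finset.sum_const, Finset.card_univ, nsmul_eq_mul, mul_one]

lemma phi_chi_dd (C : G.Coloring (Fin 2)) :
    phiL (chi G C) (fun v => chi G C v * ddF G v)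
      = 2 * (Fintype.card V : ℂ) - (Fintype.card (DirEdge G) : ℂ) := by
  show ∑ v, chi G C v * (chi G C v * ddF G v) = _
  have : ∀ v ∈ Finset.univ, chi G C v * (chi G C v * ddF G v) = ddF G v := fun v _ => by
    rw [← mul_assoc, chi_sq, one_mul]
  rw [Finset.sum_congr rfl this]
  unfold ddF
  rw [Finset.sum_sub_distrib, Finset.sum_const, Finset.card_univ, card_dirEdge]
  push_cast
  ring

lemma range_piK_nonbip (hconn : G.Connected) (hnb : ¬ G.Colorable 2) :
    finrank ℂ (LinearMap.range (piK G)) = 0 := by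
  have hb : LinearMap.range (piK G) = ⊥ :=
    le_bot_iff.mp (le_trans (range_piK_le G) (le_of_eq (ker_Bt_bot G hconn hnb)))
  simp [hb]

lemma range_piK_bip_ne (hconn : G.Connected) (C : G.Coloring (Fin 2))
    (hne : (Fintype.card (DirEdge G) : ℂ) ≠ 2 * (Fintype.card V : ℂ)) :
    finrank ℂ (LinearMap.range (piK G)) = 0 := by
  have hb : LinearMap.range (piK G) = ⊥ := by
    rw [Submodule.eq_bot_iff]
    rintro _ ⟨x, rfl⟩
    obtain ⟨hker, hBp⟩ := (mem_KK_iff G x.1).mp x.2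
    rw [ker_Bt_eq_span G hconn C, Submodule.mem_span_singleton] at hker
    obtain ⟨t, ht⟩ := hker
    have h0 := phi_Bp G (chi G C) (chi_sum_zero G C) x.1.1.1
    rw [hBp] at h0
    have heq : (fun v => x.1.2 v * ddF G v)
        = t • (fun v => chi G C v * ddF G v) := by
      funext v
      rw [← ht]
      simp only [Pi.smul_apply, smul_eq_mul]
      ring
    rw [heq, _root_.map_smul, smul_eq_mul, phi_chi_dd] at h0
    have ht0 : t = 0 := by
      rcases mul_eq_zero.mp h0 with h | h
      · exact h
      · exact absurd (by linear_combination -h) hne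
    show piK G x = 0
    show x.1.2 = 0
    rw [← ht, ht0, zero_smul]
  simp [hb]

lemma range_Bp_eq_ker_phi (hconn : G.Connected) (C : G.Coloring (Fin 2)) :
    LinearMap.range (BpL G) = LinearMap.ker (phiL (chi G C)) := by
  have hle : LinearMap.range (BpL G) ≤ LinearMap.ker (phiL (chi G C)) := by
    rintro _ ⟨f, rfl⟩
    exact LinearMap.mem_ker.mpr (phi_Bp G (chi G C) (chi_sum_zero G C) f)
  refine Submodule.eq_of_le_of_finrank_le hle ?_
  have hn : 0 < Fintype.card V := Fintype.card_pos_iff.mpr hconn.nonempty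
  have hnC : (Fintype.card V : ℂ) ≠ 0 := Nat.cast_ne_zero.mpr hn.ne'
  have hsurj : Function.Surjective (phiL (chi G C)) := by
    intro z
    refine ⟨(z / (Fintype.card V : ℂ)) • chi G C, ?_⟩
    rw [_root_.map_smul, phi_chi, smul_eq_mul]
    field_simp
  have hr : finrank ℂ (LinearMap.range (phiL (chi G C))) = 1 := by
    rw [LinearMap.range_eq_top.mpr hsurj]
    simp [finrank_top]
  have h1 := LinearMap.finrank_range_add_finrank_ker (phiL (chi G C))
  rw [hr, Module.finrank_fintype_fun_eq_card] at h1
  have h2 := rank_Bp_eq G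
  rw [finrank_ker_Bt_bip G hconn C] at h2
  omega

lemma range_piK_bip_eq (hconn : G.Connected) (C : G.Coloring (Fin 2))
    (hE : Fintype.card (DirEdge G) = 2 * Fintype.card V) :
    finrank ℂ (LinearMap.range (piK G)) = 1 := by
  have hrange : LinearMap.range (piK G) = LinearMap.ker (BtL G) := by
    refine le_antisymm (range_piK_le G) ?_
    rw [ker_Bt_eq_span G hconn C, Submodule.span_le, Set.singleton_subset_iff]
    have hy : (fun v => chi G C v * ddF G v) ∈ LinearMap.range (BpL G) := by
      rw [range_Bp_eq_ker_phi G hconn C]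
      refine LinearMap.mem_ker.mpr ?_
      rw [phi_chi_dd, hE]
      push_cast
      ring
    rw [← range_BpS G] at hy
    obtain ⟨s, hs⟩ := hy
    have hx : ((s, chi G C) : (Sym G) × (V → ℂ)) ∈ KK G := by
      rw [mem_KK_iff]
      exact ⟨chi_mem_ker G C, hs⟩
    exact ⟨⟨_, hx⟩, rfl⟩
  rw [hrange]
  exact finrank_ker_Bt_bip G hconn C

end EdgeLapAux

open EdgeLapAux Module in
/-- **Eigenvalue `−1` of the edge Laplacian.**  Let `𝔊` be a finite connected
(symmetric, loopless) graph without dead ends, with cyclomatic number `c` (so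
`2c + 2|V| = #(directed edges) + 2`); bipartiteness is `2`-colorability.
If `c ≠ 1` or `𝔊` is not bipartite, then `dim{Δ_𝔈 = −1}` equals `c` if `𝔊` is
bipartite and `c − 1` if `𝔊` is not bipartite.  If `c = 1` and `𝔊` is bipartite, then
`dim{Δ_𝔈 = −1} = 2`. -/
theorem dim_edge_laplacian_eigenspace_neg_one
    {V : Type*} [Fintype V] [DecidableEq V]
    (G : SimpleGraph V) [DecidableRel G.Adj]
    (hconn : G.Connected)
    (hdeg : ∀ x : V, 1 < G.degree x)
    (c : ℕ) (hc : 2 * c + 2 * Fintype.card V = Fintype.card (DirEdge G) + 2) :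
    ((c ≠ 1 ∨ ¬ G.Colorable 2) →
      (G.Colorable 2 →
        Module.finrank ℂ ↥(Module.End.eigenspace (edgeLaplacian G) (-1 : ℂ)) = c) ∧
      (¬ G.Colorable 2 →
        Module.finrank ℂ ↥(Module.End.eigenspace (edgeLaplacian G) (-1 : ℂ)) = c - 1)) ∧
    ((c = 1 ∧ G.Colorable 2) →
      Module.finrank ℂ ↥(Module.End.eigenspace (edgeLaplacian G) (-1 : ℂ)) = 2) := by
  classical
  have hEq : finrank ℂ ↥(Module.End.eigenspace (edgeLaplacian G) (-1 : ℂ))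
      = finrank ℂ (KK G) := finrank_eig_eq_KK G
  have hKK := finrank_KK_eq G
  have hRB := rank_Bp_eq G
  have hRN := LinearMap.finrank_range_add_finrank_ker (BpS G)
  rw [range_BpS G] at hRN
  have h2m := two_finrank_Sym G
  by_cases hcol : G.Colorable 2
  · obtain ⟨C⟩ := hcol
    have hw := EdgeLapAux.finrank_ker_Bt_bip G hconn C
    by_cases hc1 : c = 1
    · have hE : Fintype.card (DirEdge G) = 2 * Fintype.card V := by omega
      have hrp := range_piK_bip_eq G hconn C hE
      refine ⟨?_, fun _ => by omega⟩
      rintro (h | h)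
      · exact absurd hc1 h
      · exact absurd ⟨C⟩ h
    · have hneN : Fintype.card (DirEdge G) ≠ 2 * Fintype.card V := by omega
      have hne : (Fintype.card (DirEdge G) : ℂ) ≠ 2 * (Fintype.card V : ℂ) := by
        intro h
        exact hneN (by exact_mod_cast h)
      have hrp := range_piK_bip_ne G hconn C hne
      refine ⟨fun _ => ⟨fun _ => by omega, fun hnb => absurd ⟨C⟩ hnb⟩, ?_⟩
      rintro ⟨h1, -⟩
      exact absurd h1 hc1
  · have hw := EdgeLapAux.finrank_ker_Bt_nonbip G hconn hcol
    have hrp := range_piK_nonbip G hconn hcol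
    refine ⟨fun _ => ⟨fun h => absurd h hcol, fun _ => by omega⟩, ?_⟩
    rintro ⟨-, h2⟩
    exact absurd h2 hcol
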